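/- Assume the loss depends on the covariates only via the prediction function, i.e., L(f, (y, x1ᵃ, x2ᵃ)) = L(f, (y, x1ᵇ, x2ᵇ)) whenever f(x1ᵃ, x2ᵃ) = f(x1ᵇ, x2ᵇ). Suppose that for every probability distribution D on 𝒵 = 𝒴 × 𝒳₁ × 𝒳₂ under which X1 is independent of (X2, Y), there exists f_D ∈ ℱ with E_D[L(f_D, Z)] = min_{f∈ℱ} E_D[L(f, Z)] and f_D(x1ᵃ, x2) = f_D(x1ᵇ, x2) for all x1ᵃ, x1ᵇ ∈ 𝒳₁ and x2 ∈ 𝒳₂. Then any ĝ ∈ argmin_{f∈ℱ} ê_switch(f) (i.e., any minimizer of ĥ₋,γ with γ = 0) satisfies MR̂(ĝ) ≤ 1, that is, ê_switch(ĝ) ≤ ê_orig(ĝ). -/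

import Mathlib

open MeasureTheory ProbabilityTheory
open scoped ENNReal

lemma integrable_dirac_real {α : Type*} [MeasurableSpace α] {f : α → ℝ} (hf : Measurable f)
    (a : α) : Integrable f (Measure.dirac a) := by
  refine ⟨hf.aestronglyMeasurable, ?_⟩
  have h : (∫⁻ x, ‖f x‖ₑ ∂Measure.dirac a) = ‖f a‖ₑ := lintegral_dirac' a hf.enorm
  simp [HasFiniteIntegral, h]

theorem stmt_12 {𝒴 𝒳1 𝒳2 : Type*}
    [MeasurableSpace 𝒴] [MeasurableSpace 𝒳1] [MeasurableSpace 𝒳2]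
    (F : Set ((𝒳1 × 𝒳2) → 𝒴))
    (L : ((𝒳1 × 𝒳2) → 𝒴) → (𝒴 × 𝒳1 × 𝒳2) → ℝ)
    (hL : ∀ f z, 0 ≤ L f z)
    (hLmeas : ∀ f ∈ F, Measurable (L f))
    (n : ℕ) (hn : 2 ≤ n)
    (y : Fin n → 𝒴) (x1 : Fin n → 𝒳1) (x2 : Fin n → 𝒳2)
    (ehatorig ehatswitch : ((𝒳1 × 𝒳2) → 𝒴) → ℝ)
    (hehatorig : ∀ f, ehatorig f = (∑ i, L f (y i, x1 i, x2 i)) / n)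
    (hehatswitch : ∀ f, ehatswitch f =
      (∑ i, ∑ j ∈ Finset.univ.erase i, L f (y j, x1 i, x2 j)) /
        ((n : ℝ) * ((n : ℝ) - 1)))
    (hpos : ∀ f ∈ F, 0 < ehatorig f)
    -- the loss depends on the covariates only via the prediction function
    (hdep : ∀ f ∈ F, ∀ (y' : 𝒴) (x1a x1b : 𝒳1) (x2a x2b : 𝒳2),
      f (x1a, x2a) = f (x1b, x2b) → L f (y', x1a, x2a) = L f (y', x1b, x2b))
    -- Condition 3: under independence there is a best-in-class model ignoring X1
    (hcond : ∀ D : Measure (𝒴 × 𝒳1 × 𝒳2), IsProbabilityMeasure D →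
      IndepFun (fun z : 𝒴 × 𝒳1 × 𝒳2 => z.2.1) (fun z : 𝒴 × 𝒳1 × 𝒳2 => (z.1, z.2.2)) D →
      ∃ fD ∈ F, (∀ f ∈ F, (∫ z, L fD z ∂D) ≤ ∫ z, L f z ∂D) ∧
        ∀ (x1a x1b : 𝒳1) (x2' : 𝒳2), fD (x1a, x2') = fD (x1b, x2')) :
    ∀ g ∈ F, (∀ f ∈ F, ehatswitch g ≤ ehatswitch f) → ehatswitch g ≤ ehatorig g := by
  classical
  intro g hg hmin
  have hnR : (2 : ℝ) ≤ (n : ℝ) := by exact_mod_cast hn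
  have hn0 : ((n : ℝ≥0∞)) ≠ 0 := by
    simp only [ne_eq, Nat.cast_eq_zero]
    omega
  have hntop : ((n : ℝ≥0∞)) ≠ ⊤ := ENNReal.natCast_ne_top n
  set T : Fin n × Fin n → 𝒴 × 𝒳1 × 𝒳2 := fun p => (y p.2, x1 p.1, x2 p.2) with hTdef
  set D : Measure (𝒴 × 𝒳1 × 𝒳2) :=
    ((n : ℝ≥0∞) * n)⁻¹ • ∑ p : Fin n × Fin n, Measure.dirac (T p) with hDdef
  have hDapp : ∀ S : Set (𝒴 × 𝒳1 × 𝒳2),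
      D S = ((n : ℝ≥0∞) * n)⁻¹ * ∑ p : Fin n × Fin n, Measure.dirac (T p) S := by
    intro S
    rw [hDdef, Measure.smul_apply, Measure.finset_sum_apply, smul_eq_mul]
  have hprob : IsProbabilityMeasure D := by
    constructor
    rw [hDapp]
    simp only [measure_univ]
    rw [Finset.sum_const, Finset.card_univ, Fintype.card_prod, Fintype.card_fin,
      nsmul_eq_mul, Nat.cast_mul, mul_one]
    exact ENNReal.inv_mul_cancel (by exact mul_ne_zero hn0 hn0)
      (ENNReal.mul_ne_top hntop hntop)
  -- independence
  have hindep : IndepFun (fun z : 𝒴 × 𝒳1 × 𝒳2 => z.2.1)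
      (fun z : 𝒴 × 𝒳1 × 𝒳2 => (z.1, z.2.2)) D := by
    rw [indepFun_iff_measure_inter_preimage_eq_mul]
    intro A B hA hB
    have hXm : Measurable (fun z : 𝒴 × 𝒳1 × 𝒳2 => z.2.1) :=
      measurable_fst.comp measurable_snd
    have hYm : Measurable (fun z : 𝒴 × 𝒳1 × 𝒳2 => (z.1, z.2.2)) :=
      measurable_fst.prodMk (measurable_snd.comp measurable_snd)
    have hSA : MeasurableSet ((fun z : 𝒴 × 𝒳1 × 𝒳2 => z.2.1) ⁻¹' A) := hXm hA
    have hSB : MeasurableSet ((fun z : 𝒴 × 𝒳1 × 𝒳2 => (z.1, z.2.2)) ⁻¹' B) := hYm hB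
    rw [hDapp, hDapp, hDapp]
    have e1 : ∀ p : Fin n × Fin n,
        Measure.dirac (T p) ((fun z : 𝒴 × 𝒳1 × 𝒳2 => z.2.1) ⁻¹' A
          ∩ (fun z : 𝒴 × 𝒳1 × 𝒳2 => (z.1, z.2.2)) ⁻¹' B)
        = (if x1 p.1 ∈ A then 1 else 0) * (if (y p.2, x2 p.2) ∈ B then 1 else 0) := by
      intro p
      rw [Measure.dirac_apply' _ (hSA.inter hSB)]
      by_cases h1 : x1 p.1 ∈ A <;> by_cases h2 : (y p.2, x2 p.2) ∈ B <;>
        simp [Set.indicator_apply, hTdef, h1, h2]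
    have e2 : ∀ p : Fin n × Fin n,
        Measure.dirac (T p) ((fun z : 𝒴 × 𝒳1 × 𝒳2 => z.2.1) ⁻¹' A)
        = (if x1 p.1 ∈ A then 1 else 0) := by
      intro p
      rw [Measure.dirac_apply' _ hSA]
      by_cases h1 : x1 p.1 ∈ A <;> simp [Set.indicator_apply, hTdef, h1]
    have e3 : ∀ p : Fin n × Fin n,
        Measure.dirac (T p) ((fun z : 𝒴 × 𝒳1 × 𝒳2 => (z.1, z.2.2)) ⁻¹' B)
        = (if (y p.2, x2 p.2) ∈ B then 1 else 0) := by
      intro p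
      rw [Measure.dirac_apply' _ hSB]
      by_cases h2 : (y p.2, x2 p.2) ∈ B <;> simp [Set.indicator_apply, hTdef, h2]
    simp only [e1, e2, e3]
    rw [Fintype.sum_prod_type, Fintype.sum_prod_type, Fintype.sum_prod_type]
    set SA : ℝ≥0∞ := ∑ i : Fin n, if x1 i ∈ A then 1 else 0 with hSAdef
    set SB : ℝ≥0∞ := ∑ j : Fin n, if (y j, x2 j) ∈ B then 1 else 0 with hSBdef
    have f1 : (∑ i : Fin n, ∑ j : Fin n,
        (if x1 i ∈ A then (1:ℝ≥0∞) else 0) * (if (y j, x2 j) ∈ B then 1 else 0))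
        = SA * SB := (Finset.sum_mul_sum _ _ _ _).symm
    have f2 : (∑ i : Fin n, ∑ _j : Fin n, if x1 i ∈ A then (1:ℝ≥0∞) else 0)
        = (n : ℝ≥0∞) * SA := by
      rw [show (∑ i : Fin n, ∑ _j : Fin n, if x1 i ∈ A then (1:ℝ≥0∞) else 0)
          = ∑ i : Fin n, (n : ℝ≥0∞) * (if x1 i ∈ A then (1:ℝ≥0∞) else 0) from
        Finset.sum_congr rfl fun i _ => by
          rw [Finset.sum_const, Finset.card_univ, Fintype.card_fin, nsmul_eq_mul],
        hSAdef, Finset.mul_sum]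
    have f3 : (∑ _i : Fin n, ∑ j : Fin n, if (y j, x2 j) ∈ B then (1:ℝ≥0∞) else 0)
        = (n : ℝ≥0∞) * SB := by
      rw [Finset.sum_const, Finset.card_univ, Fintype.card_fin, nsmul_eq_mul, hSBdef]
    rw [f1, f2, f3]
    have hinv : ((n : ℝ≥0∞) * n)⁻¹ = (n : ℝ≥0∞)⁻¹ * (n : ℝ≥0∞)⁻¹ :=
      ENNReal.mul_inv (Or.inl hn0) (Or.inl hntop)
    have hc : (n : ℝ≥0∞)⁻¹ * n = 1 := ENNReal.inv_mul_cancel hn0 hntop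
    calc ((n : ℝ≥0∞) * n)⁻¹ * (SA * SB)
        = ((n : ℝ≥0∞)⁻¹ * n) * ((n : ℝ≥0∞)⁻¹ * n) * (((n : ℝ≥0∞) * n)⁻¹ * (SA * SB)) := by
          rw [hc]; ring
      _ = ((n : ℝ≥0∞) * n)⁻¹ * ((n : ℝ≥0∞) * SA) * (((n : ℝ≥0∞) * n)⁻¹ * ((n : ℝ≥0∞) * SB)) := by
          rw [hinv]; ring
  obtain ⟨fD, hfDF, hfDmin, hfDign⟩ := hcond D hprob hindep
  -- integral formula
  have hint : ∀ f ∈ F, ∫ z, L f z ∂D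
      = (∑ i : Fin n, ∑ j : Fin n, L f (y j, x1 i, x2 j)) / ((n : ℝ) * n) := by
    intro f hf
    rw [hDdef, integral_smul_measure,
      integral_finset_sum_measure (fun p _ => integrable_dirac_real (hLmeas f hf) (T p))]
    have : ∀ p : Fin n × Fin n, ∫ z, L f z ∂Measure.dirac (T p) = L f (T p) :=
      fun p => integral_dirac' _ _ (hLmeas f hf).stronglyMeasurable
    simp only [this]
    rw [Fintype.sum_prod_type]
    rw [ENNReal.toReal_inv, ENNReal.toReal_mul, ENNReal.toReal_natCast]
    rw [smul_eq_mul, inv_mul_eq_div]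
  -- sums
  set Sd : ((𝒳1 × 𝒳2) → 𝒴) → ℝ := fun f => ∑ i : Fin n, L f (y i, x1 i, x2 i) with hSd
  set So : ((𝒳1 × 𝒳2) → 𝒴) → ℝ :=
    fun f => ∑ i : Fin n, ∑ j ∈ Finset.univ.erase i, L f (y j, x1 i, x2 j) with hSo
  have hsplit : ∀ f, (∑ i : Fin n, ∑ j : Fin n, L f (y j, x1 i, x2 j)) = So f + Sd f := by
    intro f
    show (∑ i : Fin n, ∑ j : Fin n, L f (y j, x1 i, x2 j))
      = (∑ i : Fin n, ∑ j ∈ Finset.univ.erase i, L f (y j, x1 i, x2 j))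
        + ∑ i : Fin n, L f (y i, x1 i, x2 i)
    rw [← Finset.sum_add_distrib]
    refine Finset.sum_congr rfl fun i _ => ?_
    exact (Finset.sum_erase_add _ _ (Finset.mem_univ i)).symm
  -- fD ignores x1 in the loss
  have hfDL : ∀ i j : Fin n, L fD (y j, x1 i, x2 j) = L fD (y j, x1 j, x2 j) :=
    fun i j => hdep fD hfDF (y j) (x1 i) (x1 j) (x2 j) (x2 j) (hfDign _ _ _)
  have hfDfull : (∑ i : Fin n, ∑ j : Fin n, L fD (y j, x1 i, x2 j)) = (n : ℝ) * Sd fD := by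
    have : ∀ i : Fin n, (∑ j : Fin n, L fD (y j, x1 i, x2 j)) = Sd fD := by
      intro i
      exact Finset.sum_congr rfl fun j _ => hfDL i j
    rw [Finset.sum_congr rfl fun i _ => this i, Finset.sum_const, Finset.card_univ,
      Fintype.card_fin, nsmul_eq_mul]
  have hfDSo : So fD = ((n : ℝ) - 1) * Sd fD := by
    have := hsplit fD
    rw [hfDfull] at this
    linarith
  -- the inequality chain
  have hpn : (0:ℝ) < n := by linarith
  have hpn1 : (0:ℝ) < (n:ℝ) - 1 := by linarith
  have h1 : ehatswitch g ≤ ehatswitch fD := hmin fD hfDF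
  have h2 : ehatswitch fD = Sd fD / n := by
    rw [hehatswitch,
      show (∑ i : Fin n, ∑ j ∈ Finset.univ.erase i, L fD (y j, x1 i, x2 j))
        = ((n:ℝ) - 1) * Sd fD from hfDSo,
      mul_comm ((n:ℝ)) ((n:ℝ) - 1), mul_div_mul_left _ _ (ne_of_gt hpn1)]
  have h3 : Sd fD / n = ∫ z, L fD z ∂D := by
    rw [hint fD hfDF, hfDfull, mul_div_mul_left _ _ (ne_of_gt hpn)]
  have h4 : (∫ z, L fD z ∂D) ≤ ∫ z, L g z ∂D := hfDmin g hg
  have h5 : (∫ z, L g z ∂D) = (So g + Sd g) / ((n:ℝ) * n) := by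
    rw [hint g hg, hsplit g]
  have hchain : ehatswitch g ≤ (So g + Sd g) / ((n:ℝ) * n) := by
    calc ehatswitch g ≤ ehatswitch fD := h1
      _ = Sd fD / n := h2
      _ = ∫ z, L fD z ∂D := h3
      _ ≤ ∫ z, L g z ∂D := h4
      _ = (So g + Sd g) / ((n:ℝ) * n) := h5
  have hsw : ehatswitch g = So g / ((n:ℝ) * ((n:ℝ) - 1)) := hehatswitch g
  have hor : ehatorig g = Sd g / n := hehatorig g
  rw [hsw, hor]
  rw [hsw] at hchain
  have key : So g ≤ ((n:ℝ) - 1) * Sd g := by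
    rw [div_le_div_iff₀ (by positivity) (by positivity)] at hchain
    nlinarith [hchain]
  rw [div_le_div_iff₀ (by positivity) (by positivity)]
  nlinarith [key]
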